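/- Let T be a trigonal graph with boundary cycle ∂T and |V(T)| = t, and let u, v be two distinct vertices of T with dist_{∂T}(u, v) = d. Then for every integer ℓ with d ≤ ℓ ≤ t − d, there exists a path in T from u to v of length ℓ. In particular, if u and v are adjacent on ∂T, then for every ℓ with 1 ≤ ℓ ≤ t − 1 there is a (u,v)-path in T of length ℓ. -/

import Mathlib

open SimpleGraph

namespace Dean

variable {V : Type*}

noncomputable def degN (G : SimpleGraph V) (v : V) : ℕ := (G.neighborSet v).ncard

def HasCycleMod (G : SimpleGraph V) (k : ℕ) (r : ℤ) : Prop :=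
  ∃ (v : V) (c : G.Walk v v), c.IsCycle ∧ (k : ℤ) ∣ ((c.length : ℤ) - r)

def HasConsecutiveCycles (G : SimpleGraph V) (k : ℕ) : Prop :=
  ∃ a : ℕ, ∀ i < k, ∃ (v : V) (c : G.Walk v v), c.IsCycle ∧ c.length = a + i

def HasAdmissibleCycles (G : SimpleGraph V) (k : ℕ) : Prop :=
  ∃ a d : ℕ, (d = 1 ∨ d = 2) ∧
    ∀ i < k, ∃ (v : V) (c : G.Walk v v), c.IsCycle ∧ c.length = a + d * i

/-- `HGraph k n t` : complete bipartite `K_{k,n}` minus `k - t` edges at the vertex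
`Sum.inr 0` of the part of size `n`, so that this vertex keeps exactly `t` neighbours. -/
def HGraph (k n t : ℕ) : SimpleGraph (Fin k ⊕ Fin n) :=
  SimpleGraph.fromRel fun x y =>
    ∃ (i : Fin k) (j : Fin n), x = Sum.inl i ∧ y = Sum.inr j ∧ (j.val ≠ 0 ∨ i.val < t)

def IsKkplus1 (k : ℕ) (G : SimpleGraph V) : Prop :=
  Nonempty (G ≃g completeGraph (Fin (k + 1)))

def IsKkk (k : ℕ) (G : SimpleGraph V) : Prop :=
  Nonempty (G ≃g completeBipartiteGraph (Fin k) (Fin k))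

def IsHGraph (k : ℕ) (G : SimpleGraph V) : Prop :=
  ∃ n t, 2 ≤ t ∧ t ≤ k ∧ k < n ∧ Nonempty (G ≃g HGraph k n t)

def IsExceptional (k : ℕ) (G : SimpleGraph V) : Prop :=
  IsKkplus1 k G ∨ IsKkk k G ∨ IsHGraph k G

def IsBipExceptional (k : ℕ) (G : SimpleGraph V) : Prop :=
  IsKkk k G ∨ IsHGraph k G

def IsCutVertex (G : SimpleGraph V) (v : V) : Prop :=
  ∃ (a b : V) (ha : a ≠ v) (hb : b ≠ v), G.Reachable a b ∧
    ¬ (G.induce {u : V | u ≠ v}).Reachable ⟨a, ha⟩ ⟨b, hb⟩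

def NoCutVtxIn (G : SimpleGraph V) (B : Set V) : Prop :=
  ∀ v ∈ B, B = {v} ∨ (G.induce (B \ {v})).Connected

def IsBlockSet (G : SimpleGraph V) (B : Set V) : Prop :=
  (G.induce B).Connected ∧ NoCutVtxIn G B ∧
    ∀ B' : Set V, B ⊆ B' → (G.induce B').Connected → NoCutVtxIn G B' → B' = B

def IsEndBlock (G : SimpleGraph V) (B : Set V) : Prop :=
  IsBlockSet G B ∧ {v | v ∈ B ∧ IsCutVertex G v}.Subsingleton

def IsThreeConnected (G : SimpleGraph V) : Prop :=
  4 ≤ Nat.card V ∧ ∀ S : Set V, S.ncard ≤ 2 → (G.induce (Sᶜ : Set V)).Connected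

def IsTwoConnected (G : SimpleGraph V) : Prop :=
  3 ≤ Nat.card V ∧ ∀ v : V, (G.induce ({v}ᶜ : Set V)).Connected

def TypeOne (k : ℕ) (G : SimpleGraph V) : Prop :=
  IsThreeConnected G ∧ {v : V | degN G v < k}.Subsingleton

/-- the graph `G - θ + θ₁θ₂`. -/
def modGraph (G : SimpleGraph V) (θ θ₁ θ₂ : V) (h₁ : θ₁ ≠ θ) (h₂ : θ₂ ≠ θ) :
    SimpleGraph ↥{u : V | u ≠ θ} :=
  (G.induce {u : V | u ≠ θ}) ⊔ SimpleGraph.fromEdgeSet {s(⟨θ₁, h₁⟩, ⟨θ₂, h₂⟩)}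

def TypeTwo (k : ℕ) (G : SimpleGraph V) (θ θ₁ θ₂ : V) : Prop :=
  degN G θ = 2 ∧ (∀ v, degN G v = 2 → v = θ) ∧
  G.Adj θ θ₁ ∧ G.Adj θ θ₂ ∧ θ₁ ≠ θ₂ ∧
  ∃ (h₁ : θ₁ ≠ θ) (h₂ : θ₂ ≠ θ),
    IsThreeConnected (modGraph G θ θ₁ θ₂ h₁ h₂) ∧
    ∀ v, k ≤ degN (modGraph G θ θ₁ θ₂ h₁ h₂) v

def IsKWeak (k : ℕ) (G : SimpleGraph V) : Prop :=
  TypeOne k G ∨ ∃ θ θ₁ θ₂, TypeTwo k G θ θ₁ θ₂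

inductive IsTrigonal : SimpleGraph V → SimpleGraph V → Set V → Prop
  | base (a b c : V) (hab : a ≠ b) (hbc : b ≠ c) (hac : a ≠ c) :
      IsTrigonal (SimpleGraph.fromEdgeSet {s(a, b), s(b, c), s(a, c)})
        (SimpleGraph.fromEdgeSet {s(a, b), s(b, c), s(a, c)}) {a, b, c}
  | extend (T B : SimpleGraph V) (S : Set V) (a b x : V)
      (h : IsTrigonal T B S) (hx : x ∉ S) (hab : B.Adj a b) :
      IsTrigonal (T ⊔ SimpleGraph.fromEdgeSet {s(a, x), s(x, b)})
        (B.deleteEdges {s(a, b)} ⊔ SimpleGraph.fromEdgeSet {s(a, x), s(x, b)})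
        (insert x S)

inductive IsTetragonal : SimpleGraph V → SimpleGraph V → Set V → Prop
  | base (a b c d : V) (hab : a ≠ b) (hac : a ≠ c) (had : a ≠ d)
      (hbc : b ≠ c) (hbd : b ≠ d) (hcd : c ≠ d) :
      IsTetragonal (SimpleGraph.fromEdgeSet {s(a, b), s(b, c), s(c, d), s(d, a)})
        (SimpleGraph.fromEdgeSet {s(a, b), s(b, c), s(c, d), s(d, a)}) {a, b, c, d}
  | extend (T B : SimpleGraph V) (S : Set V) (a b x y : V)
      (h : IsTetragonal T B S) (hx : x ∉ S) (hy : y ∉ S) (hxy : x ≠ y) (hab : B.Adj a b) :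
      IsTetragonal (T ⊔ SimpleGraph.fromEdgeSet {s(a, x), s(x, y), s(y, b)})
        (B.deleteEdges {s(a, b)} ⊔ SimpleGraph.fromEdgeSet {s(a, x), s(x, y), s(y, b)})
        (insert x (insert y S))

def IsTetragonalSubgraph (G T B : SimpleGraph V) (S : Set V) : Prop :=
  IsTetragonal T B S ∧ T ≤ G

def IsOptimalTetragonal (G T B : SimpleGraph V) (S : Set V) : Prop :=
  IsTetragonalSubgraph G T B S ∧
  (∀ (T' B' : SimpleGraph V) (S' : Set V),
    IsTetragonalSubgraph G T' B' S' → S'.ncard ≤ S.ncard) ∧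
  (∀ (T' B' : SimpleGraph V) (S' : Set V),
    IsTetragonalSubgraph G T' B' S' → S'.ncard = S.ncard →
      (G.induce S').edgeSet.ncard ≤ (G.induce S).edgeSet.ncard)


structure CycS (B : SimpleGraph V) (S : Set V) (t : ℕ) where
  ht : 3 ≤ t
  f : ZMod t → V
  inj : Function.Injective f
  hrange : Set.range f = S
  hadj : ∀ x y, B.Adj x y ↔
    ∃ i, (x = f i ∧ y = f (i + 1)) ∨ (y = f i ∧ x = f (i + 1))

namespace CycS

variable {B : SimpleGraph V} {S : Set V} {t : ℕ}

lemma nz (C : CycS B S t) : NeZero t := ⟨by have := C.ht; omega⟩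

lemma mem_S (C : CycS B S t) (i : ZMod t) : C.f i ∈ S := by
  have h := Set.mem_range_self (f := C.f) i
  rwa [C.hrange] at h

lemma adj_step (C : CycS B S t) (i : ZMod t) : B.Adj (C.f i) (C.f (i + 1)) :=
  (C.hadj _ _).2 ⟨i, Or.inl ⟨rfl, rfl⟩⟩

lemma exists_arc (C : CycS B S t) :
    ∀ (n : ℕ) (i j : ZMod t), j = i + (n : ZMod t) →
      ∃ p : B.Walk (C.f i) (C.f j), p.length = n ∧
        p.support = (List.range (n + 1)).map (fun m : ℕ => C.f (i + (m : ZMod t))) := by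
  intro n
  induction n with
  | zero =>
    intro i j hj
    have : j = i := by simpa using hj
    subst this
    exact ⟨Walk.nil, rfl, by rw [List.range_succ]; simp⟩
  | succ n ih =>
    intro i j hj
    obtain ⟨p, hl, hs⟩ := ih (i + 1) j (by rw [hj]; push_cast; ring)
    refine ⟨Walk.cons (C.adj_step i) p, by simp [hl], ?_⟩
    rw [Walk.support_cons, hs]
    have h1 : List.range (n + 1 + 1) = 0 :: (List.range (n + 1)).map Nat.succ :=
      List.range_succ_eq_map
    rw [h1, List.map_cons, List.map_map]
    congr 1
    · simp
    · apply List.map_congr_left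
      intro m _
      simp only [Function.comp_apply]
      congr 1
      push_cast
      ring

lemma arc_isPath (C : CycS B S t) (n : ℕ) (hn : n ≤ t - 1) (i j : ZMod t)
    (hj : j = i + (n : ZMod t)) :
    ∃ p : B.Walk (C.f i) (C.f j), p.IsPath ∧ p.length = n := by
  haveI := C.nz
  obtain ⟨p, hl, hs⟩ := C.exists_arc n i j hj
  refine ⟨p, ?_, hl⟩
  rw [Walk.isPath_def, hs]
  refine List.Nodup.map_on ?_ List.nodup_range
  intro m₁ hm₁ m₂ hm₂ h
  simp only [List.mem_range] at hm₁ hm₂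
  have ht3 := C.ht
  have h2 := C.inj h
  have h3 : ((m₁ : ℕ) : ZMod t) = ((m₂ : ℕ) : ZMod t) := add_left_cancel h2
  have h4 : ((m₁ : ℕ) : ZMod t).val = ((m₂ : ℕ) : ZMod t).val := by rw [h3]
  have h5 : m₁ < t := by omega
  have h6 : m₂ < t := by omega
  rwa [ZMod.val_cast_of_lt h5, ZMod.val_cast_of_lt h6] at h4

lemma arc_extreme (C : CycS B S t) (i j : ZMod t) (hij : i ≠ j) (ℓ : ℕ)
    (hℓ : ℓ = (j - i).val ∨ ℓ = (i - j).val) :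
    ∃ p : B.Walk (C.f i) (C.f j), p.IsPath ∧ p.length = ℓ := by
  haveI := C.nz
  rcases hℓ with hℓ | hℓ
  · refine C.arc_isPath ℓ ?_ i j ?_
    · have := ZMod.val_lt (j - i); omega
    · rw [hℓ, ZMod.natCast_zmod_val]; ring
  · have hb1 : ℓ ≤ t - 1 := by have := ZMod.val_lt (i - j); omega
    have hb2 : i = j + ((ℓ : ℕ) : ZMod t) := by rw [hℓ, ZMod.natCast_zmod_val]; ring
    obtain ⟨p, hp, hl⟩ := C.arc_isPath ℓ hb1 j i hb2
    exact ⟨p.reverse, hp.reverse, by simp [hl]⟩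

lemma winding (C : CycS B S t) {x y : V} (p : B.Walk x y) :
    ∀ (i j : ZMod t), x = C.f i → y = C.f j →
      ∃ s : ℤ, s.natAbs ≤ p.length ∧ (s : ZMod t) = j - i := by
  induction p with
  | nil =>
    intro i j hi hj
    have : i = j := C.inj (hi ▸ hj ▸ rfl)
    exact ⟨0, by simp, by rw [this]; simp⟩
  | @cons u z y h q ih =>
    intro i j hi hj
    obtain ⟨m, hm⟩ := (C.hadj u z).1 h
    rcases hm with ⟨hu, hz⟩ | ⟨hz, hu⟩
    · have him : i = m := C.inj (hi ▸ hu ▸ rfl)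
      obtain ⟨s, hs1, hs2⟩ := ih (i + 1) j (by rw [hz, him]) hj
      refine ⟨s + 1, ?_, ?_⟩
      · calc (s + 1).natAbs ≤ s.natAbs + (1 : ℤ).natAbs := Int.natAbs_add_le s 1
          _ ≤ q.length + 1 := by simp only [Int.natAbs_one]; omega
          _ = (Walk.cons h q).length := by simp
      · push_cast [hs2]; ring
    · have him : i = m + 1 := C.inj (hi ▸ hu ▸ rfl)
      obtain ⟨s, hs1, hs2⟩ := ih (i - 1) j (by rw [hz, him]; ring_nf) hj
      refine ⟨s - 1, ?_, ?_⟩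
      · calc (s - 1).natAbs ≤ s.natAbs + (1 : ℤ).natAbs := Int.natAbs_sub_le s 1
          _ ≤ q.length + 1 := by simp only [Int.natAbs_one]; omega
          _ = (Walk.cons h q).length := by simp
      · push_cast [hs2]; ring

lemma min_le_natAbs {t : ℕ} (ht : 3 ≤ t) (g : ZMod t) (hg : g ≠ 0) (s : ℤ)
    (hs : (s : ZMod t) = g) : min g.val (-g).val ≤ s.natAbs := by
  haveI : NeZero t := ⟨by omega⟩
  have h1 : (-g).val = t - g.val := by rw [ZMod.neg_val, if_neg hg]
  have h2 : g.val < t := ZMod.val_lt g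
  have h3 : g.val ≠ 0 := fun h => hg ((ZMod.val_eq_zero g).1 h)
  have h4 : (t : ℤ) ∣ (s - (g.val : ℤ)) := by
    apply (ZMod.intCast_zmod_eq_zero_iff_dvd _ _).1
    push_cast [hs, ZMod.natCast_zmod_val]
    ring
  obtain ⟨kk, hk⟩ := h4
  rcases lt_trichotomy kk 0 with hkk | hkk | hkk
  · have : (t : ℤ) * kk ≤ (t : ℤ) * (-1) := by
      apply mul_le_mul_of_nonneg_left (by omega) (by positivity)
    omega
  · subst hkk; omega
  · have : (t : ℤ) * 1 ≤ (t : ℤ) * kk := by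
      apply mul_le_mul_of_nonneg_left (by omega) (by positivity)
    omega

lemma dist_eq (C : CycS B S t) (i j : ZMod t) (hij : i ≠ j) :
    B.dist (C.f i) (C.f j) = min (j - i).val (i - j).val := by
  haveI := C.nz
  apply le_antisymm
  · apply le_min
    · obtain ⟨p, _, hl⟩ := C.arc_extreme i j hij (j - i).val (Or.inl rfl)
      exact hl ▸ SimpleGraph.dist_le p
    · obtain ⟨p, _, hl⟩ := C.arc_extreme i j hij (i - j).val (Or.inr rfl)
      exact hl ▸ SimpleGraph.dist_le p
  · obtain ⟨p0, _, _⟩ := C.arc_extreme i j hij (j - i).val (Or.inl rfl)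
    obtain ⟨p, hp⟩ := SimpleGraph.Reachable.exists_walk_length_eq_dist ⟨p0⟩
    obtain ⟨s, hs1, hs2⟩ := C.winding p i j rfl rfl
    have hg : j - i ≠ 0 := sub_ne_zero.2 (Ne.symm hij)
    have := min_le_natAbs C.ht (j - i) hg s hs2
    rw [neg_sub] at this
    omega

lemma val_add_val_neg {t : ℕ} [NeZero t] (g : ZMod t) (hg : g ≠ 0) :
    g.val + (-g).val = t := by
  have h1 : (-g).val = t - g.val := by rw [ZMod.neg_val, if_neg hg]
  have h2 : g.val < t := ZMod.val_lt g
  omega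

end CycS

def PP (T B : SimpleGraph V) (S : Set V) (t : ℕ) : Prop :=
  ∀ ⦃u v : V⦄, u ∈ S → v ∈ S → u ≠ v → ∀ ℓ : ℕ,
    B.dist u v ≤ ℓ → ℓ ≤ t - B.dist u v →
      ∃ p : T.Walk u v, p.IsPath ∧ p.length = ℓ

lemma walk_support_subset {G : SimpleGraph V} {S : Set V}
    (hG : ∀ x y, G.Adj x y → x ∈ S ∧ y ∈ S) {u v : V} (p : G.Walk u v)
    (hu : u ∈ S) : ∀ w ∈ p.support, w ∈ S := by
  induction p with
  | nil => intro w hw; simp at hw; rwa [hw]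
  | @cons u z y h q ih =>
    intro w hw
    rw [Walk.support_cons, List.mem_cons] at hw
    rcases hw with hw | hw
    · rwa [hw]
    · exact ih (hG _ _ h).2 w hw

lemma cons_path_reverse {G : SimpleGraph V} {u c x : V} (p : G.Walk u c)
    (hp : p.IsPath) (h : G.Adj c x) (hx : x ∉ p.support) :
    ∃ q : G.Walk u x, q.IsPath ∧ q.length = p.length + 1 := by
  refine ⟨(Walk.cons h.symm p.reverse).reverse, ?_, by simp⟩
  apply Walk.IsPath.reverse
  rw [Walk.cons_isPath_iff]
  exact ⟨hp.reverse, by simpa using hx⟩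

lemma transfer_le {G H : SimpleGraph V} (hGH : G ≤ H) {u v : V} (p : G.Walk u v) :
    ∃ q : H.Walk u v, q.length = p.length ∧ q.support = p.support ∧
      (p.IsPath → q.IsPath) := by
  have he : ∀ e ∈ p.edges, e ∈ H.edgeSet :=
    fun e hep => SimpleGraph.edgeSet_mono hGH (p.edges_subset_edgeSet hep)
  exact ⟨p.transfer H he, Walk.length_transfer p he, Walk.support_transfer p he,
    fun hp => hp.transfer he⟩


section Base

variable {V : Type*}

lemma base_cycS (a b c : V) (hab : a ≠ b) (hbc : b ≠ c) (hac : a ≠ c) :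
    Nonempty (CycS (SimpleGraph.fromEdgeSet {s(a, b), s(b, c), s(a, c)})
      ({a, b, c} : Set V) 3) := by
  set f : ZMod 3 → V := fun i => if i = 0 then a else if i = 1 then b else c with hf
  have hall : ∀ i : ZMod 3, i = 0 ∨ i = 1 ∨ i = 2 := by decide
  have hf0 : f 0 = a := by simp [hf]
  have hf1 : f 1 = b := by norm_num [hf]
  have h20 : (2 : ZMod 3) ≠ 0 := by decide
  have h21 : (2 : ZMod 3) ≠ 1 := by decide
  have hf2 : f 2 = c := by simp [hf, h20, h21]
  have hf3 : f (2 + 1) = a := by rw [show (2 + 1 : ZMod 3) = 0 by decide]; exact hf0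
  refine ⟨⟨le_refl 3, f, ?_, ?_, ?_⟩⟩
  · intro i j h
    rcases hall i with hi | hi | hi <;> rcases hall j with hj | hj | hj <;>
      subst hi <;> subst hj <;> simp_all <;> tauto
  · ext w
    simp only [Set.mem_range, Set.mem_insert_iff, Set.mem_singleton_iff]
    constructor
    · rintro ⟨i, rfl⟩
      rcases hall i with hi | hi | hi <;> subst hi <;> simp [hf0, hf1, hf2]
    · rintro (rfl | rfl | rfl)
      exacts [⟨0, hf0⟩, ⟨1, hf1⟩, ⟨2, hf2⟩]
  · intro x y
    rw [SimpleGraph.fromEdgeSet_adj]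
    constructor
    · rintro ⟨hm, hne⟩
      simp only [Set.mem_insert_iff, Set.mem_singleton_iff, Sym2.eq_iff] at hm
      rcases hm with (⟨rfl, rfl⟩ | ⟨rfl, rfl⟩) | (⟨rfl, rfl⟩ | ⟨rfl, rfl⟩) |
        (⟨rfl, rfl⟩ | ⟨rfl, rfl⟩)
      · exact ⟨0, Or.inl ⟨hf0.symm, by rw [zero_add, hf1]⟩⟩
      · exact ⟨0, Or.inr ⟨hf0.symm, by rw [zero_add, hf1]⟩⟩
      · exact ⟨1, Or.inl ⟨hf1.symm, by rw [show (1 : ZMod 3) + 1 = 2 by decide, hf2]⟩⟩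
      · exact ⟨1, Or.inr ⟨hf1.symm, by rw [show (1 : ZMod 3) + 1 = 2 by decide, hf2]⟩⟩
      · exact ⟨2, Or.inr ⟨hf2.symm, hf3.symm⟩⟩
      · exact ⟨2, Or.inl ⟨hf2.symm, hf3.symm⟩⟩
    · rintro ⟨i, hi⟩
      have key : ∀ u w : V, u = f i → w = f (i + 1) →
          s(u, w) ∈ ({s(a, b), s(b, c), s(a, c)} : Set (Sym2 V)) ∧ u ≠ w := by
        intro u w hu hw
        rcases hall i with hi' | hi' | hi' <;> subst hi' <;>
          simp -failIfUnchanged only [zero_add] at hu hw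
        · rw [hu, hw, hf0, hf1]; exact ⟨by simp, hab⟩
        · rw [hu, hw, hf1, show (1 : ZMod 3) + 1 = 2 by decide, hf2]
          exact ⟨by simp, hbc⟩
        · rw [hu, hw, hf2, hf3]
          refine ⟨by simp [Sym2.eq_swap], fun h => hac h.symm⟩
      rcases hi with ⟨hx, hy⟩ | ⟨hy, hx⟩
      · exact key x y hx hy
      · obtain ⟨hm, hne⟩ := key y x hy hx
        have hsw : s(x, y) = s(y, x) := Sym2.eq_swap
        exact ⟨by rw [hsw]; exact hm, hne.symm⟩

lemma pp_three {T B : SimpleGraph V} {S : Set V} (C : CycS B S 3) (hBT : B ≤ T) :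
    PP T B S 3 := by
  haveI := C.nz
  intro u v hu hv huv ℓ h1 h2
  rw [← C.hrange] at hu hv
  obtain ⟨i, rfl⟩ := hu
  obtain ⟨j, rfl⟩ := hv
  have hij : i ≠ j := fun h => huv (by rw [h])
  rw [C.dist_eq i j hij] at h1 h2
  have heq : i - j = -(j - i) := by ring
  have hs := CycS.val_add_val_neg (j - i) (sub_ne_zero.2 (Ne.symm hij))
  have hv1 : (j - i).val < 3 := ZMod.val_lt _
  have hv0 : (j - i).val ≠ 0 := fun h => (sub_ne_zero.2 (Ne.symm hij)) ((ZMod.val_eq_zero _).1 h)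
  have hcase : ℓ = (j - i).val ∨ ℓ = (i - j).val := by
    rw [heq]; rw [heq] at h1 h2; omega
  obtain ⟨p, hp, hl⟩ := C.arc_extreme i j hij ℓ hcase
  obtain ⟨q, hq1, _, hq3⟩ := transfer_le hBT p
  exact ⟨q, hq3 hp, by rw [hq1, hl]⟩

end Base

section Step

variable {V : Type*}

set_option maxHeartbeats 1000000 in
lemma step {T B : SimpleGraph V} {S : Set V} {t : ℕ} (C : CycS B S t)
    (hBT : B ≤ T) (hTS : ∀ u w, T.Adj u w → u ∈ S ∧ w ∈ S) (hPP : PP T B S t)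
    {x a b : V} (hx : x ∉ S) {k : ZMod t} (ha : a = C.f k) (hb : b = C.f (k + 1)) :
    Nonempty (CycS (B.deleteEdges {s(a, b)} ⊔ SimpleGraph.fromEdgeSet {s(a, x), s(x, b)})
        (insert x S) (t + 1)) ∧
      PP (T ⊔ SimpleGraph.fromEdgeSet {s(a, x), s(x, b)})
        (B.deleteEdges {s(a, b)} ⊔ SimpleGraph.fromEdgeSet {s(a, x), s(x, b)})
        (insert x S) (t + 1) := by
  haveI := C.nz
  haveI : NeZero (t + 1) := ⟨by omega⟩
  haveI : Fact (1 < t) := ⟨by have := C.ht; omega⟩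
  have ht3 := C.ht
  set B' := B.deleteEdges {s(a, b)} ⊔ SimpleGraph.fromEdgeSet {s(a, x), s(x, b)} with hB'def
  set T' := T ⊔ SimpleGraph.fromEdgeSet {s(a, x), s(x, b)} with hT'def
  have haS : a ∈ S := by rw [ha]; exact C.mem_S k
  have hbS : b ∈ S := by rw [hb]; exact C.mem_S (k + 1)
  have hax : a ≠ x := fun h => hx (h ▸ haS)
  have hbx : b ≠ x := fun h => hx (h ▸ hbS)
  have hone : (1 : ZMod t) ≠ 0 := by
    intro h
    have := ZMod.val_one t
    rw [h, ZMod.val_zero] at this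
    omega
  have hneg1 : ((t - 1 : ℕ) : ZMod t) = -1 := by
    have h1 : ((t - 1 : ℕ) : ZMod t) = (t : ZMod t) - 1 := by
      rw [Nat.cast_sub (by omega : 1 ≤ t)]; push_cast; ring
    rw [h1, ZMod.natCast_self]; ring
  have hneg1val : (-1 : ZMod t).val = t - 1 := by
    rw [ZMod.neg_val, if_neg (by simpa using hone), ZMod.val_one]
  -- the new cycle parametrisation
  set g : ZMod (t + 1) → V :=
    fun m => if m.val < t then C.f (k + 1 + (m.val : ZMod t)) else x with hgdef
  have hg_lt : ∀ m : ZMod (t + 1), m.val < t → g m = C.f (k + 1 + (m.val : ZMod t)) :=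
    fun m h => if_pos h
  have hg_ge : ∀ m : ZMod (t + 1), ¬m.val < t → g m = x := fun m h => if_neg h
  have hvlt : ∀ m : ZMod (t + 1), m.val < t + 1 := fun m => ZMod.val_lt m
  have hcastval : ∀ n : ℕ, n < t + 1 → ((n : ZMod (t + 1)).val) = n :=
    fun n h => ZMod.val_cast_of_lt h
  have hgnat : ∀ n : ℕ, n < t → g ((n : ℕ) : ZMod (t + 1)) = C.f (k + 1 + (n : ZMod t)) := by
    intro n hn
    rw [hg_lt _ (by rw [hcastval n (by omega)]; exact hn), hcastval n (by omega)]
  have hg0 : g 0 = b := by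
    have h0 := hgnat 0 (by omega)
    rw [show ((0 : ℕ) : ZMod (t + 1)) = 0 by norm_num] at h0
    rw [h0, hb]; norm_num
  have hgt : g ((t : ℕ) : ZMod (t + 1)) = x :=
    hg_ge _ (by rw [hcastval t (by omega)]; omega)
  have hgt1 : g ((t - 1 : ℕ) : ZMod (t + 1)) = a := by
    rw [hgnat (t - 1) (by omega), hneg1, ha]
    congr 1; ring
  have hgf : ∀ i : ZMod t, g (((i - (k + 1)).val : ℕ) : ZMod (t + 1)) = C.f i := by
    intro i
    rw [hgnat _ (ZMod.val_lt _), ZMod.natCast_zmod_val]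
    congr 1; ring
  have hstep1 : ((t - 1 : ℕ) : ZMod (t + 1)) + 1 = ((t : ℕ) : ZMod (t + 1)) := by
    rw [show (t : ℕ) = (t - 1) + 1 by omega]; push_cast; ring
  have hstept : ((t : ℕ) : ZMod (t + 1)) + 1 = 0 := by
    rw [show ((t : ℕ) : ZMod (t + 1)) + 1 = (((t + 1 : ℕ)) : ZMod (t + 1)) by push_cast; ring,
      ZMod.natCast_self]
  -- injectivity of g
  have hginj : Function.Injective g := by
    intro m₁ m₂ h
    by_cases h1 : m₁.val < t <;> by_cases h2 : m₂.val < t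
    · rw [hg_lt _ h1, hg_lt _ h2] at h
      have h3 := add_left_cancel (C.inj h)
      have h4 := congrArg ZMod.val h3
      rw [ZMod.val_cast_of_lt h1, ZMod.val_cast_of_lt h2] at h4
      exact ZMod.val_injective _ h4
    · rw [hg_lt _ h1, hg_ge _ h2] at h
      exact absurd (h ▸ C.mem_S _) hx
    · rw [hg_ge _ h1, hg_lt _ h2] at h
      exact absurd (h.symm ▸ C.mem_S _) hx
    · have e1 := hvlt m₁
      have e2 := hvlt m₂
      exact ZMod.val_injective _ (by omega)
  -- range of g
  have hgrange : Set.range g = insert x S := by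
    ext w
    simp only [Set.mem_range, Set.mem_insert_iff]
    constructor
    · rintro ⟨n, rfl⟩
      by_cases h1 : n.val < t
      · right; rw [hg_lt _ h1]; exact C.mem_S _
      · left; exact hg_ge _ h1
    · rintro (rfl | hw)
      · exact ⟨((t : ℕ) : ZMod (t + 1)), hgt⟩
      · rw [← C.hrange] at hw
        obtain ⟨i, rfl⟩ := hw
        exact ⟨_, hgf i⟩
  -- forward adjacency helper
  have hfwd : ∀ (i : ZMod t) (u w : V), u = C.f i → w = C.f (i + 1) → s(u, w) ≠ s(a, b) →
      ∃ n : ZMod (t + 1), u = g n ∧ w = g (n + 1) := by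
    intro i u w hu hw hne
    have hnt : (i - (k + 1)).val < t := ZMod.val_lt _
    have hnne : (i - (k + 1)).val ≠ t - 1 := by
      intro hcon
      apply hne
      have hik : i = k := by
        have h5 : i - (k + 1) = ((t - 1 : ℕ) : ZMod t) := by
          rw [← hcon, ZMod.natCast_zmod_val]
        rw [hneg1] at h5
        linear_combination h5
      rw [hu, hw, hik, ha, hb]
    refine ⟨(((i - (k + 1)).val : ℕ) : ZMod (t + 1)), ?_, ?_⟩
    · rw [hu]; exact (hgf i).symm
    · have hstep : ((((i - (k + 1)).val : ℕ) : ZMod (t + 1)) + 1)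
          = (((i - (k + 1)).val + 1 : ℕ) : ZMod (t + 1)) := by push_cast; ring
      rw [hw, hstep, hgnat ((i - (k + 1)).val + 1) (by omega)]
      congr 1
      push_cast [ZMod.natCast_zmod_val]
      ring
  -- backward adjacency helper
  have hbwd : ∀ n : ZMod (t + 1), B'.Adj (g n) (g (n + 1)) := by
    intro n
    rcases lt_trichotomy n.val (t - 1) with hn | hn | hn
    · -- inside the old cycle
      have hnv : (n + 1).val = n.val + 1 := by
        rw [show n + 1 = ((n.val + 1 : ℕ) : ZMod (t + 1)) by push_cast [ZMod.natCast_zmod_val]; ring,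
          hcastval _ (by omega)]
      have h1 : g n = C.f (k + 1 + (n.val : ZMod t)) := hg_lt _ (by omega)
      have h2 : g (n + 1) = C.f (k + 1 + (n.val : ZMod t) + 1) := by
        rw [hg_lt _ (by rw [hnv]; omega), hnv]
        congr 1
        push_cast
        ring
      rw [hB'def]
      rw [SimpleGraph.sup_adj]
      left
      rw [SimpleGraph.deleteEdges_adj]
      constructor
      · rw [h1, h2]
        exact C.adj_step _
      · simp only [Set.mem_singleton_iff]
        intro hmem
        rw [h1, h2, ha, hb, Sym2.eq_iff] at hmem
        rcases hmem with ⟨hm1, hm2⟩ | ⟨hm1, hm2⟩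
        · have hc := C.inj hm1
          have : (n.val : ZMod t) = -1 := by linear_combination hc
          have := congrArg ZMod.val this
          rw [ZMod.val_cast_of_lt (by omega : n.val < t), hneg1val] at this
          omega
        · have hc1 := C.inj hm1
          have hc2 := C.inj hm2
          have : ((2 : ℕ) : ZMod t) = 0 := by push_cast; linear_combination hc2 - hc1
          have := (ZMod.natCast_eq_zero_iff _ _).1 this
          have := Nat.le_of_dvd (by omega) this
          omega
    · -- the edge a-x
      have hnn : n = ((t - 1 : ℕ) : ZMod (t + 1)) :=
        ZMod.val_injective _ (by rw [hcastval (t - 1) (by omega)]; omega)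
      rw [hnn, hgt1, hstep1, hgt, hB'def]
      rw [SimpleGraph.sup_adj]
      right
      rw [SimpleGraph.fromEdgeSet_adj]
      exact ⟨by simp, hax⟩
    · -- the edge x-b
      have hnt : n.val = t := by have := hvlt n; omega
      have hnn : n = ((t : ℕ) : ZMod (t + 1)) :=
        ZMod.val_injective _ (by rw [hcastval t (by omega)]; omega)
      rw [hnn, hgt, hstept, hg0, hB'def]
      rw [SimpleGraph.sup_adj]
      right
      rw [SimpleGraph.fromEdgeSet_adj]
      exact ⟨by simp, fun h => hbx h.symm⟩
  -- the adjacency characterisation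
  have hadj' : ∀ u w, B'.Adj u w ↔
      ∃ n, (u = g n ∧ w = g (n + 1)) ∨ (w = g n ∧ u = g (n + 1)) := by
    intro u w
    constructor
    · intro hA
      rw [hB'def, SimpleGraph.sup_adj] at hA
      rcases hA with hA | hA
      · rw [SimpleGraph.deleteEdges_adj] at hA
        obtain ⟨hA1, hA2⟩ := hA
        simp only [Set.mem_singleton_iff] at hA2
        obtain ⟨i, hi⟩ := (C.hadj u w).1 hA1
        rcases hi with ⟨hu, hw⟩ | ⟨hw, hu⟩
        · obtain ⟨n, h1, h2⟩ := hfwd i u w hu hw hA2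
          exact ⟨n, Or.inl ⟨h1, h2⟩⟩
        · obtain ⟨n, h1, h2⟩ := hfwd i w u hw hu (fun hcon => hA2 (Sym2.eq_swap.trans hcon))
          exact ⟨n, Or.inr ⟨h1, h2⟩⟩
      · rw [SimpleGraph.fromEdgeSet_adj] at hA
        obtain ⟨hm, hne⟩ := hA
        simp only [Set.mem_insert_iff, Set.mem_singleton_iff, Sym2.eq_iff] at hm
        rcases hm with (⟨rfl, rfl⟩ | ⟨rfl, rfl⟩) | (⟨rfl, rfl⟩ | ⟨rfl, rfl⟩)
        · exact ⟨((t - 1 : ℕ) : ZMod (t + 1)), Or.inl ⟨hgt1.symm, by rw [hstep1, hgt]⟩⟩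
        · exact ⟨((t - 1 : ℕ) : ZMod (t + 1)), Or.inr ⟨hgt1.symm, by rw [hstep1, hgt]⟩⟩
        · exact ⟨((t : ℕ) : ZMod (t + 1)), Or.inl ⟨hgt.symm, by rw [hstept, hg0]⟩⟩
        · exact ⟨((t : ℕ) : ZMod (t + 1)), Or.inr ⟨hgt.symm, by rw [hstept, hg0]⟩⟩
    · rintro ⟨n, ⟨hu, hw⟩ | ⟨hw, hu⟩⟩
      · rw [hu, hw]; exact hbwd n
      · rw [hu, hw]; exact (hbwd n).symm
  let Cp : CycS B' (insert x S) (t + 1) := ⟨by omega, g, hginj, hgrange, hadj'⟩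
  have hdist' : ∀ α β : ZMod (t + 1), α ≠ β →
      B'.dist (g α) (g β) = min (β - α).val (α - β).val :=
    fun α β h => Cp.dist_eq α β h
  have harcex : ∀ (α β : ZMod (t + 1)), α ≠ β → ∀ ℓ : ℕ,
      ℓ = (β - α).val ∨ ℓ = (α - β).val →
      ∃ p : B'.Walk (g α) (g β), p.IsPath ∧ p.length = ℓ :=
    fun α β h ℓ hℓ => Cp.arc_extreme α β h ℓ hℓ
  refine ⟨⟨Cp⟩, ?_⟩
  -- now the path property
  have hB'T' : B' ≤ T' :=
    sup_le_sup_right (le_trans (SimpleGraph.deleteEdges_le _) hBT) _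
  have hTT' : T ≤ T' := le_sup_left
  have haxT' : T'.Adj a x := by
    rw [hT'def]
    rw [SimpleGraph.sup_adj]
    right
    rw [SimpleGraph.fromEdgeSet_adj]
    exact ⟨by simp, hax⟩
  have hbxT' : T'.Adj b x := by
    rw [hT'def]
    rw [SimpleGraph.sup_adj]
    right
    rw [SimpleGraph.fromEdgeSet_adj]
    refine ⟨?_, hbx⟩
    rw [show s(b, x) = s(x, b) from Sym2.eq_swap]
    simp
  have viaC : ∀ (c u : V), T'.Adj c x → c ∈ S → u ∈ S → u ≠ c → ∀ n : ℕ,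
      B.dist u c ≤ n → n ≤ t - B.dist u c →
      ∃ q : T'.Walk u x, q.IsPath ∧ q.length = n + 1 := by
    intro c u hcx hc huS huc n hn1 hn2
    obtain ⟨p, hp, hl⟩ := hPP huS hc huc n hn1 hn2
    obtain ⟨p', hp'1, hp'2, hp'3⟩ := transfer_le hTT' p
    have hxs : x ∉ p'.support := by
      rw [hp'2]
      intro hcon
      exact hx (walk_support_subset hTS p huS x hcon)
    obtain ⟨q, hq, hql⟩ := cons_path_reverse p' (hp'3 hp) hcx hxs
    exact ⟨q, hq, by omega⟩
  have hba : b ≠ a := by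
    rw [ha, hb]
    intro hcon
    exact hone (by linear_combination C.inj hcon)
  have hdab : B.dist a b = 1 := by
    rw [ha, hb, C.dist_eq k (k + 1) (fun hcon => hone (by linear_combination -hcon))]
    have e1 : k + 1 - k = 1 := by ring
    have e2 : k - (k + 1) = -1 := by ring
    rw [e1, e2, ZMod.val_one, hneg1val]
    omega
  have hdba : B.dist b a = 1 := by rw [SimpleGraph.dist_comm]; exact hdab
  have key : ∀ α β : ZMod (t + 1), α.val < β.val → ∀ ℓ : ℕ,
      B'.dist (g α) (g β) ≤ ℓ → ℓ ≤ (t + 1) - B'.dist (g α) (g β) →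
      ∃ p : T'.Walk (g α) (g β), p.IsPath ∧ p.length = ℓ := by
    intro α β hαβval ℓ h1 h2
    have hαβ : α ≠ β := fun h => by rw [h] at hαβval; omega
    have hQ : β.val < t + 1 := hvlt β
    have hβα : β - α = ((β.val - α.val : ℕ) : ZMod (t + 1)) := by
      rw [Nat.cast_sub (le_of_lt hαβval), ZMod.natCast_zmod_val, ZMod.natCast_zmod_val]
    have hβαval : (β - α).val = β.val - α.val := by
      rw [hβα, hcastval _ (by omega)]
    have hαβval2 : (α - β).val = t + 1 - (β.val - α.val) := by
      have h0 : β - α ≠ 0 := sub_ne_zero.2 (Ne.symm hαβ)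
      have hvv := CycS.val_add_val_neg (β - α) h0
      rw [show α - β = -(β - α) by ring]
      omega
    rw [hdist' α β hαβ, hβαval, hαβval2] at h1 h2
    by_cases hQt : β.val < t
    · -- both endpoints in S
      have hgα : g α = C.f (k + 1 + (α.val : ZMod t)) := hg_lt α (by omega)
      have hgβ : g β = C.f (k + 1 + (β.val : ZMod t)) := hg_lt β hQt
      have hij : k + 1 + (α.val : ZMod t) ≠ k + 1 + (β.val : ZMod t) := by
        intro hcon
        have h3 := add_left_cancel hcon
        have h4 := congrArg ZMod.val h3
        rw [ZMod.val_cast_of_lt (by omega : α.val < t), ZMod.val_cast_of_lt hQt] at h4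
        omega
      by_cases harc : ℓ = β.val - α.val ∨ ℓ = t + 1 - (β.val - α.val)
      · have harc' : ℓ = (β - α).val ∨ ℓ = (α - β).val := by
          rw [hβαval, hαβval2]; exact harc
        obtain ⟨p, hp, hl⟩ := harcex α β hαβ ℓ harc'
        obtain ⟨q, hq1, _, hq3⟩ := transfer_le hB'T' p
        exact ⟨q, hq3 hp, by omega⟩
      · -- interior lengths come from the old graph
        have hfd : B.dist (C.f (k + 1 + (α.val : ZMod t))) (C.f (k + 1 + (β.val : ZMod t)))
            = min (β.val - α.val) (t - (β.val - α.val)) := by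
          rw [C.dist_eq _ _ hij]
          have e1 : (k + 1 + (β.val : ZMod t)) - (k + 1 + (α.val : ZMod t))
              = ((β.val - α.val : ℕ) : ZMod t) := by
            rw [Nat.cast_sub (le_of_lt hαβval)]; push_cast; ring
          have e2 : ((β.val - α.val : ℕ) : ZMod t).val = β.val - α.val :=
            ZMod.val_cast_of_lt (by omega)
          have e0 : ((β.val - α.val : ℕ) : ZMod t) ≠ 0 := by
            intro hcon
            have e4 := e2
            rw [hcon, ZMod.val_zero] at e4
            omega
          have e3 : ((k + 1 + (α.val : ZMod t)) - (k + 1 + (β.val : ZMod t))).val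
              = t - (β.val - α.val) := by
            have hvv := CycS.val_add_val_neg ((β.val - α.val : ℕ) : ZMod t) e0
            rw [show (k + 1 + (α.val : ZMod t)) - (k + 1 + (β.val : ZMod t))
              = -((k + 1 + (β.val : ZMod t)) - (k + 1 + (α.val : ZMod t))) by ring, e1]
            omega
          rw [e1, e2, e3]
        obtain ⟨p, hp, hl⟩ := hPP (C.mem_S _) (C.mem_S _)
          (fun h => hij (C.inj h)) ℓ
          (by rw [hfd]; omega) (by rw [hfd]; omega)
        obtain ⟨q, hq1, _, hq3⟩ := transfer_le hTT' p
        rw [hgα, hgβ]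
        exact ⟨q, hq3 hp, by omega⟩
    · -- β is the new vertex x
      have hQt' : β.val = t := by omega
      have hgβx : g β = x := hg_ge β (by omega)
      rw [hgβx]
      have hPt : α.val < t := by omega
      have hgαf : g α = C.f (k + 1 + (α.val : ZMod t)) := hg_lt α hPt
      by_cases hP0 : α.val = 0
      · -- the start is b
        have hgαb : g α = b := by
          rw [hgαf, hP0, hb]; norm_num
        rw [hgαb]
        rcases Nat.eq_or_lt_of_le (show 1 ≤ ℓ by omega) with hl1 | hl2
        · exact ⟨Walk.cons hbxT' Walk.nil, by
            rw [Walk.cons_isPath_iff]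
            exact ⟨Walk.IsPath.nil, by simpa using hbx⟩, by simp [← hl1]⟩
        · obtain ⟨q, hq, hql⟩ := viaC a b haxT' haS hbS hba (ℓ - 1)
            (by rw [hdba]; omega) (by rw [hdba]; omega)
          exact ⟨q, hq, by omega⟩
      · by_cases hPt1 : α.val = t - 1
        · -- the start is a
          have hgαa : g α = a := by
            rw [hgαf, hPt1, hneg1, ha]
            congr 1; ring
          rw [hgαa]
          rcases Nat.eq_or_lt_of_le (show 1 ≤ ℓ by omega) with hl1 | hl2
          · exact ⟨Walk.cons haxT' Walk.nil, by
              rw [Walk.cons_isPath_iff]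
              exact ⟨Walk.IsPath.nil, by simpa using hax⟩, by simp [← hl1]⟩
          · obtain ⟨q, hq, hql⟩ := viaC b a hbxT' hbS haS (fun h => hba h.symm) (ℓ - 1)
              (by rw [hdab]; omega) (by rw [hdab]; omega)
            exact ⟨q, hq, by omega⟩
        · -- generic start, go via a or via b
          have h1P : 1 ≤ α.val := by omega
          have h2P : α.val ≤ t - 2 := by omega
          rw [hgαf]
          have hne_a : C.f (k + 1 + (α.val : ZMod t)) ≠ a := by
            rw [ha]
            intro hcon
            have h5 : (α.val : ZMod t) = -1 := by linear_combination C.inj hcon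
            have h6 := congrArg ZMod.val h5
            rw [ZMod.val_cast_of_lt hPt, hneg1val] at h6
            omega
          have hne_b : C.f (k + 1 + (α.val : ZMod t)) ≠ b := by
            rw [hb]
            intro hcon
            have h5 : (α.val : ZMod t) = 0 := by linear_combination C.inj hcon
            have h6 := congrArg ZMod.val h5
            rw [ZMod.val_cast_of_lt hPt, ZMod.val_zero] at h6
            omega
          have hda : B.dist (C.f (k + 1 + (α.val : ZMod t))) a
              = min (t - (α.val + 1)) (α.val + 1) := by
            rw [ha, C.dist_eq _ k (fun h => hne_a (by rw [ha]; exact congrArg C.f h))]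
            have e1 : k - (k + 1 + (α.val : ZMod t)) = -(((α.val + 1 : ℕ) : ZMod t)) := by
              push_cast; ring
            have e2 : ((α.val + 1 : ℕ) : ZMod t).val = α.val + 1 :=
              ZMod.val_cast_of_lt (by omega)
            have e0 : ((α.val + 1 : ℕ) : ZMod t) ≠ 0 := by
              intro hcon
              have e4 := e2
              rw [hcon, ZMod.val_zero] at e4
              omega
            have hvv := CycS.val_add_val_neg ((α.val + 1 : ℕ) : ZMod t) e0
            have e3 : (k + 1 + (α.val : ZMod t) - k) = ((α.val + 1 : ℕ) : ZMod t) := by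
              push_cast; ring
            rw [e1, e3, e2]
            omega
          have hdb : B.dist (C.f (k + 1 + (α.val : ZMod t))) b
              = min (t - α.val) α.val := by
            rw [hb, C.dist_eq _ (k + 1) (fun h => hne_b (by rw [hb]; exact congrArg C.f h))]
            have e1 : (k + 1) - (k + 1 + (α.val : ZMod t)) = -(((α.val : ℕ) : ZMod t)) := by
              push_cast; ring
            have e2 : ((α.val : ℕ) : ZMod t).val = α.val := ZMod.val_cast_of_lt hPt
            have e0 : ((α.val : ℕ) : ZMod t) ≠ 0 := by
              intro hcon
              have e4 := e2
              rw [hcon, ZMod.val_zero] at e4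
              omega
            have hvv := CycS.val_add_val_neg ((α.val : ℕ) : ZMod t) e0
            have e3 : (k + 1 + (α.val : ZMod t) - (k + 1)) = ((α.val : ℕ) : ZMod t) := by
              push_cast; ring
            rw [e1, e3, e2]
            omega
          have hℓ1 : 1 ≤ ℓ := by omega
          have hcover : (min (t - (α.val + 1)) (α.val + 1) ≤ ℓ - 1
                ∧ ℓ - 1 ≤ t - min (t - (α.val + 1)) (α.val + 1))
              ∨ (min (t - α.val) α.val ≤ ℓ - 1
                ∧ ℓ - 1 ≤ t - min (t - α.val) α.val) := by
            omega
          rcases hcover with ⟨hc1, hc2⟩ | ⟨hc1, hc2⟩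
          · obtain ⟨q, hq, hql⟩ := viaC a (C.f (k + 1 + (α.val : ZMod t))) haxT' haS
              (C.mem_S _) hne_a (ℓ - 1) (by rw [hda]; exact hc1) (by rw [hda]; exact hc2)
            exact ⟨q, hq, by omega⟩
          · obtain ⟨q, hq, hql⟩ := viaC b (C.f (k + 1 + (α.val : ZMod t))) hbxT' hbS
              (C.mem_S _) hne_b (ℓ - 1) (by rw [hdb]; exact hc1) (by rw [hdb]; exact hc2)
            exact ⟨q, hq, by omega⟩
  -- assemble PP from `key`
  intro u v hu hv huv ℓ h1 h2
  rw [← hgrange] at hu hv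
  obtain ⟨α, rfl⟩ := hu
  obtain ⟨β, rfl⟩ := hv
  have hne : α ≠ β := fun h => huv (congrArg g h)
  rcases lt_trichotomy α.val β.val with hlt | heq | hgt
  · exact key α β hlt ℓ h1 h2
  · exact absurd (ZMod.val_injective _ heq) hne
  · obtain ⟨p, hp, hl⟩ := key β α hgt ℓ
      (by rw [SimpleGraph.dist_comm]; exact h1) (by rw [SimpleGraph.dist_comm]; exact h2)
    exact ⟨p.reverse, hp.reverse, by simp [hl]⟩

end Step

section Main

variable {V : Type*}

theorem trig_struct {T B : SimpleGraph V} {S : Set V} (h : IsTrigonal T B S) :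
    ∃ t : ℕ, Nonempty (CycS B S t) ∧ B ≤ T ∧
      (∀ u w, T.Adj u w → u ∈ S ∧ w ∈ S) ∧ PP T B S t := by
  induction h with
  | base a b c hab hbc hac =>
    obtain ⟨C⟩ := base_cycS a b c hab hbc hac
    refine ⟨3, ⟨C⟩, le_refl _, ?_, pp_three C (le_refl _)⟩
    intro u w huw
    rw [SimpleGraph.fromEdgeSet_adj] at huw
    obtain ⟨hm, -⟩ := huw
    simp only [Set.mem_insert_iff, Set.mem_singleton_iff, Sym2.eq_iff] at hm
    constructor <;> · rcases hm with (⟨rfl,rfl⟩|⟨rfl,rfl⟩)|(⟨rfl,rfl⟩|⟨rfl,rfl⟩)|(⟨rfl,rfl⟩|⟨rfl,rfl⟩) <;> simp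
  | extend T B S a b x h hx hab ih =>
    obtain ⟨t, ⟨C⟩, hBT, hTS, hPP⟩ := ih
    have hxS' : x ∉ S := hx
    have hTS' : ∀ u w, (T ⊔ SimpleGraph.fromEdgeSet {s(a, x), s(x, b)}).Adj u w →
        u ∈ insert x S ∧ w ∈ insert x S := by
      intro u w huw
      rcases huw with huw | huw
      · obtain ⟨h1, h2⟩ := hTS u w huw
        exact ⟨Set.mem_insert_of_mem _ h1, Set.mem_insert_of_mem _ h2⟩
      · rw [SimpleGraph.fromEdgeSet_adj] at huw
        obtain ⟨hm, -⟩ := huw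
        have haS : a ∈ S := (hTS a b (hBT hab)).1
        have hbS : b ∈ S := (hTS a b (hBT hab)).2
        simp only [Set.mem_insert_iff, Set.mem_singleton_iff, Sym2.eq_iff] at hm
        rcases hm with (⟨rfl, rfl⟩ | ⟨rfl, rfl⟩) | (⟨rfl, rfl⟩ | ⟨rfl, rfl⟩) <;>
          simp [haS, hbS]
    obtain ⟨m, hm⟩ := (C.hadj a b).1 hab
    have hBT' : B.deleteEdges {s(a, b)} ⊔ SimpleGraph.fromEdgeSet {s(a, x), s(x, b)} ≤
        T ⊔ SimpleGraph.fromEdgeSet {s(a, x), s(x, b)} :=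
      sup_le_sup_right (le_trans (SimpleGraph.deleteEdges_le _) hBT) _
    rcases hm with ⟨hma, hmb⟩ | ⟨hmb, hma⟩
    · obtain ⟨hC', hPP'⟩ := step C hBT hTS hPP hx hma hmb
      exact ⟨t + 1, hC', hBT', hTS', hPP'⟩
    · have e1 : s(b, a) = s(a, b) := Sym2.eq_swap
      have e2 : ({s(b, x), s(x, a)} : Set (Sym2 V)) = {s(a, x), s(x, b)} := by
        rw [show s(b, x) = s(x, b) from Sym2.eq_swap, show s(x, a) = s(a, x) from Sym2.eq_swap]
        exact Set.pair_comm _ _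
      obtain ⟨hC', hPP'⟩ := step C hBT hTS hPP hx hmb hma
      rw [e1, e2] at hC' hPP'
      exact ⟨t + 1, hC', hBT', hTS', hPP'⟩

end Main

/-- Proposition 3.2: path lengths in a trigonal graph. -/
theorem trigonal_paths {V : Type*} (T B : SimpleGraph V) (S : Set V) (t : ℕ)
    (hT : IsTrigonal T B S) (hcard : S.ncard = t)
    (u v : V) (hu : u ∈ S) (hv : v ∈ S) (huv : u ≠ v) (d : ℕ) (hd : B.dist u v = d) :
    (∀ ℓ : ℕ, d ≤ ℓ → ℓ ≤ t - d → ∃ p : T.Walk u v, p.IsPath ∧ p.length = ℓ) ∧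
    (B.Adj u v → ∀ ℓ : ℕ, 1 ≤ ℓ → ℓ ≤ t - 1 →
      ∃ p : T.Walk u v, p.IsPath ∧ p.length = ℓ) := by
  obtain ⟨t', ⟨C⟩, hBT, hTS, hPP⟩ := trig_struct hT
  have hcard' : S.ncard = t' := by
    rw [← C.hrange, ← Nat.card_coe_set_eq, Nat.card_range_of_injective C.inj,
      Nat.card_zmod]
  have htt : t = t' := by rw [← hcard, hcard']
  subst htt
  constructor
  · intro ℓ h1 h2
    exact hPP hu hv huv ℓ (by omega) (by omega)
  · intro hadj ℓ h1 h2
    have hr : B.Reachable u v := ⟨Walk.cons hadj Walk.nil⟩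
    have hd1 : B.dist u v = 1 := by
      apply le_antisymm
      · have := SimpleGraph.dist_le (Walk.cons hadj Walk.nil)
        simpa using this
      · exact hr.pos_dist_of_ne huv
    have hdd : d = 1 := by omega
    exact hPP hu hv huv ℓ (by omega) (by omega)

end Dean
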